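/- Let K ≥ 1, let X be a nonempty finite set (of first-stage designs), let A : X → Set (ℝ^K) assign to each x a nonempty finite set A x of achievable objective vectors, and let Q be a nonempty finite subset of ℝ^K (the ideal Pareto front). Then the minimum over x ∈ X of I(ParetoSet (A x), Q) equals the minimum over x ∈ X and over functions s : Q → ℝ^K with s q ∈ A x for all q ∈ Q, of max over q ∈ Q and i ∈ Fin K of (s q i − q i). (This is the equivalence between the flex-hand problem min_x I(P(x), P*) and its reformulation as a single optimization problem with one second-stage solution per ideal Pareto point.) -/

import Mathlib

set_option maxHeartbeats 2000000


/-- The Pareto set of `S ⊆ ℝ^K`: points of `S` that are minimal under the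
componentwise partial order (no other point of `S` strictly dominates them). -/
def ParetoSet {K : ℕ} (S : Set (Fin K → ℝ)) : Set (Fin K → ℝ) :=
  {p | p ∈ S ∧ ∀ q ∈ S, (∀ i, q i ≤ p i) → q = p}

/-- The additive binary `ε`-indicator `I(P,Q)`: the smallest `ε ∈ ℝ` such that
every `q ∈ Q` is weakly dominated within `ε` by some `p ∈ P`. -/
noncomputable def epsInd {K : ℕ} (P Q : Set (Fin K → ℝ)) : ℝ :=
  sInf {ε : ℝ | ∀ q ∈ Q, ∃ p ∈ P, ∀ i, p i - q i ≤ ε}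

lemma exists_pareto_le {K : ℕ} {S : Set (Fin K → ℝ)} (hS : S.Finite) {p : Fin K → ℝ}
    (hp : p ∈ S) : ∃ p' ∈ ParetoSet S, ∀ i, p' i ≤ p i := by
  have hT : {a ∈ S | a ≤ p}.Finite := hS.subset (Set.sep_subset _ _)
  obtain ⟨a, ⟨haS, hap⟩, hmin⟩ : ∃ a ∈ {a ∈ S | a ≤ p}, ∀ a' ∈ {a ∈ S | a ≤ p}, a' ≤ a → a = a' := by
    obtain ⟨a, ha⟩ := hT.exists_minimal ⟨p, hp, le_refl p⟩
    exact ⟨a, ha.prop, fun a' h' hle => (ha.eq_of_le h' hle).symm⟩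
  refine ⟨a, ⟨haS, ?_⟩, fun i => hap i⟩
  intro q hqS hq
  have hq' : q ≤ a := fun i => hq i
  exact (hmin q ⟨hqS, hq'.trans hap⟩ hq').symm

/-- The flex-hand problem `min_{x} I(ParetoSet (A x), Q)` equals (indeed, is the
minimum of) the reformulated single optimization problem, minimizing over `x`
and over choices `s` of one achievable point `s q ∈ A x` per ideal Pareto point
`q ∈ Q`, the value `max_{q ∈ Q} max_{i} (s q i − q i)`. -/
theorem flexHand_reformulation {K : ℕ} (hK : 1 ≤ K)
    (X : Type*) [Fintype X] [Nonempty X]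
    (A : X → Set (Fin K → ℝ)) (hAf : ∀ x, (A x).Finite) (hA : ∀ x, (A x).Nonempty)
    (Q : Set (Fin K → ℝ)) (hQf : Q.Finite) (hQne : Q.Nonempty) :
    IsLeast
      {ε : ℝ | ∃ x : X, ∃ s : (Fin K → ℝ) → (Fin K → ℝ),
        (∀ q ∈ Q, s q ∈ A x) ∧
        ε = hQf.toFinset.sup' (by simpa using hQne) fun q =>
              Finset.univ.sup' (Finset.univ_nonempty_iff.mpr ⟨⟨0, hK⟩⟩)
                fun i : Fin K => s q i - q i}
      (Finset.univ.inf' Finset.univ_nonempty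
        fun x : X => epsInd (ParetoSet (A x)) Q) := by
  have hKne : (Finset.univ : Finset (Fin K)).Nonempty :=
    Finset.univ_nonempty_iff.mpr ⟨⟨0, hK⟩⟩
  have hQne' : hQf.toFinset.Nonempty := by simpa using hQne
  have hAne' : ∀ x, (hAf x).toFinset.Nonempty := fun x => by simpa using hA x
  have key : ∀ x, epsInd (ParetoSet (A x)) Q =
      hQf.toFinset.sup' hQne' fun q => (hAf x).toFinset.inf' (hAne' x)
        fun p => Finset.univ.sup' hKne fun i => p i - q i := by
    intro x
    have hset : {ε : ℝ | ∀ q ∈ Q, ∃ p ∈ ParetoSet (A x), ∀ i, p i - q i ≤ ε}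
        = Set.Ici (hQf.toFinset.sup' hQne' fun q => (hAf x).toFinset.inf' (hAne' x)
            fun p => Finset.univ.sup' hKne fun i => p i - q i) := by
      ext ε
      simp only [Set.mem_setOf_eq, Set.mem_Ici]
      constructor
      · intro h
        apply Finset.sup'_le
        intro q hq
        obtain ⟨p, hp, hpe⟩ := h q (hQf.mem_toFinset.mp hq)
        exact le_trans (Finset.inf'_le _ ((hAf x).mem_toFinset.mpr hp.1))
          (Finset.sup'_le _ _ fun i _ => hpe i)
      · intro h q hq
        have hq' : q ∈ hQf.toFinset := hQf.mem_toFinset.mpr hq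
        obtain ⟨p, hp, hpeq⟩ := Finset.exists_mem_eq_inf' (hAne' x)
          (fun p => Finset.univ.sup' hKne fun i => p i - q i)
        obtain ⟨p', hp', hle⟩ := exists_pareto_le (hAf x) ((hAf x).mem_toFinset.mp hp)
        refine ⟨p', hp', fun i => ?_⟩
        have h4 := (Finset.sup'_le_iff hQne' _).mp h q hq'
        rw [hpeq] at h4
        have h2 : p i - q i ≤ Finset.univ.sup' hKne (fun j => p j - q j) :=
          Finset.le_sup' (fun j => p j - q j) (Finset.mem_univ i)
        have h1 := hle i
        linarith
    rw [epsInd, hset, csInf_Ici]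
  constructor
  · obtain ⟨x, -, hxe⟩ := Finset.exists_mem_eq_inf' (Finset.univ_nonempty (α := X))
      (fun x : X => epsInd (ParetoSet (A x)) Q)
    refine ⟨x, fun q => Classical.choose (Finset.exists_mem_eq_inf' (hAne' x)
      (fun p => Finset.univ.sup' hKne fun i => p i - q i)), fun q _ => ?_, ?_⟩
    · exact (hAf x).mem_toFinset.mp (Classical.choose_spec (Finset.exists_mem_eq_inf' (hAne' x)
        (fun p => Finset.univ.sup' hKne fun i => p i - q i))).1
    · rw [hxe, key x]
      refine Finset.sup'_congr hQne' rfl fun q _ => ?_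
      exact (Classical.choose_spec (Finset.exists_mem_eq_inf' (hAne' x)
        (fun p => Finset.univ.sup' hKne fun i => p i - q i))).2
  · rintro ε ⟨x, s, hs, rfl⟩
    refine le_trans (Finset.inf'_le _ (Finset.mem_univ x)) ?_
    rw [key x]
    refine Finset.sup'_mono_fun fun q hq => ?_
    exact Finset.inf'_le _ ((hAf x).mem_toFinset.mpr (hs q (hQf.mem_toFinset.mp hq)))
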